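/- arXiv:2605.10908 — 3 statements merged into one kernel-verified Lean document; each statement's English description precedes it below -/
import Mathlib

section
/- For every positive integer q and every n ≥ 1, the set of probability distributions on ℝⁿ of random vectors that can be written as the sum of q standard Gaussian vectors is closed under weak convergence: if a sequence of random vectors, each expressible as the sum of q standard Gaussian vectors, converges weakly to a random vector X, then X is also the sum of q standard Gaussian vectors. -/
open MeasureTheory Real Filter
open scoped ENNReal BoundedContinuousFunction
open Topology TopologicalSpace
open scoped NNReal

/-- The standard Gaussian measure `N(0, Iₙ)` on `ℝⁿ`. -/
noncomputable def stdGaussian (n : ℕ) : Measure (EuclideanSpace ℝ (Fin n)) :=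
  (MeasureTheory.Measure.pi fun _ : Fin n => ProbabilityTheory.gaussianReal 0 1).map
    (MeasurableEquiv.toLp 2 (Fin n → ℝ))

/-- `μ` is the distribution of the sum of `k` standard Gaussian random vectors in `ℝⁿ`,
defined on a common probability space. -/
def IsSumOfStdGaussians (n k : ℕ) (μ : Measure (EuclideanSpace ℝ (Fin n))) : Prop :=
  ∃ (Ω : Type) (_ : MeasurableSpace Ω) (P : Measure Ω)
    (Y : Fin k → Ω → EuclideanSpace ℝ (Fin n)),
    IsProbabilityMeasure P ∧ (∀ i, Measurable (Y i)) ∧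
    (∀ i, Measure.map (Y i) P = stdGaussian n) ∧
    Measure.map (fun ω => ∑ i, Y i ω) P = μ

namespace SumGaussAux

variable {X : Type} [MetricSpace X] [SeparableSpace X] [Nonempty X]

/-- countable family of bump functions -/
noncomputable def bump (p : ℕ × ℚ × ℚ) (x : X) : ℝ≥0 :=
  Real.toNNReal (min 1 (((p.2.2 : ℝ) - dist x (denseSeq X p.1)) / ((p.2.2 : ℝ) - (p.2.1 : ℝ))))

lemma bump_le_one (p : ℕ × ℚ × ℚ) (x : X) : bump p x ≤ 1 := by
  have : Real.toNNReal (min 1 (((p.2.2 : ℝ) - dist x (denseSeq X p.1)) / ((p.2.2 : ℝ) - (p.2.1 : ℝ)))) ≤ Real.toNNReal 1 :=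
    Real.toNNReal_mono (min_le_left _ _)
  unfold bump
  exact le_trans this (by simp)

lemma bump_continuous (p : ℕ × ℚ × ℚ) : Continuous fun x : X => bump p x := by
  apply continuous_real_toNNReal.comp
  exact (continuous_const.min (((continuous_const.sub (continuous_id.dist continuous_const))).div_const _))

lemma bump_eq_one (p : ℕ × ℚ × ℚ) (x : X) (hrs : p.2.1 < p.2.2)
    (h : dist x (denseSeq X p.1) ≤ (p.2.1 : ℝ)) : bump p x = 1 := by
  have hd : (0:ℝ) < (p.2.2 : ℝ) - (p.2.1 : ℝ) := by
    have : (p.2.1 : ℝ) < (p.2.2 : ℝ) := by exact_mod_cast hrs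
    linarith
  have h1 : (1:ℝ) ≤ ((p.2.2 : ℝ) - dist x (denseSeq X p.1)) / ((p.2.2 : ℝ) - (p.2.1 : ℝ)) := by
    rw [le_div_iff₀ hd]; linarith
  have : min 1 (((p.2.2 : ℝ) - dist x (denseSeq X p.1)) / ((p.2.2 : ℝ) - (p.2.1 : ℝ))) = 1 :=
    min_eq_left h1
  simp [bump, this]

lemma bump_eq_zero (p : ℕ × ℚ × ℚ) (x : X) (hrs : p.2.1 < p.2.2)
    (h : (p.2.2 : ℝ) ≤ dist x (denseSeq X p.1)) : bump p x = 0 := by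
  have hd : (0:ℝ) < (p.2.2 : ℝ) - (p.2.1 : ℝ) := by
    have : (p.2.1 : ℝ) < (p.2.2 : ℝ) := by exact_mod_cast hrs
    linarith
  have h1 : ((p.2.2 : ℝ) - dist x (denseSeq X p.1)) / ((p.2.2 : ℝ) - (p.2.1 : ℝ)) ≤ 0 :=
    div_nonpos_of_nonpos_of_nonneg (by linarith) hd.le
  have : min 1 (((p.2.2 : ℝ) - dist x (denseSeq X p.1)) / ((p.2.2 : ℝ) - (p.2.1 : ℝ))) ≤ 0 :=
    le_trans (min_le_right _ _) h1
  simp [bump, Real.toNNReal_of_nonpos this]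

/-- finite sup of bumps, as a real-valued function -/
noncomputable def FS (S : Finset (ℕ × ℚ × ℚ)) (x : X) : ℝ :=
  ((S.sup fun p => bump p x : ℝ≥0) : ℝ)

lemma FS_nonneg (S : Finset (ℕ × ℚ × ℚ)) (x : X) : 0 ≤ FS S x := (S.sup fun p => bump p x).2

lemma FS_le_one (S : Finset (ℕ × ℚ × ℚ)) (x : X) : FS S x ≤ 1 := by
  have : (S.sup fun p => bump p x) ≤ 1 := Finset.sup_le fun p _ => bump_le_one p x
  exact_mod_cast this

lemma FS_continuous (S : Finset (ℕ × ℚ × ℚ)) : Continuous fun x : X => FS S x := by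
  apply NNReal.continuous_coe.comp
  classical
  induction S using Finset.induction with
  | empty => simpa using continuous_const
  | insert _ _ h ih =>
      simp only [Finset.sup_insert]
      exact (bump_continuous _).sup ih

lemma FS_union (S T : Finset (ℕ × ℚ × ℚ)) (x : X) :
    FS (S ∪ T) x = max (FS S x) (FS T x) := by
  classical
  simp [FS, Finset.sup_union, NNReal.coe_max]

lemma le_FS_of_mem {S : Finset (ℕ × ℚ × ℚ)} {p : ℕ × ℚ × ℚ} (hp : p ∈ S) (x : X) :
    ((bump p x : ℝ≥0) : ℝ) ≤ FS S x := by
  exact_mod_cast Finset.le_sup (f := fun p => bump p x) hp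

lemma FS_eq_zero {S : Finset (ℕ × ℚ × ℚ)} {x : X} (h : ∀ p ∈ S, bump p x = 0) :
    FS S x = 0 := by
  have : (S.sup fun p => bump p x) = 0 := le_antisymm (Finset.sup_le fun p hp => (h p hp).le) bot_le
  simp [FS, this]

/-- Urysohn-type separation within the countable family. -/
lemma exists_FS (K U : Set X) (hK : IsCompact K) (hU : IsOpen U) (hKU : K ⊆ U) :
    ∃ S : Finset (ℕ × ℚ × ℚ), (∀ x ∈ K, FS S x = 1) ∧ (∀ x, x ∉ U → FS S x = 0) := by
  classical
  have hsel : ∀ x : K, ∃ p : ℕ × ℚ × ℚ, p.2.1 < p.2.2 ∧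
      dist (x : X) (denseSeq X p.1) < (p.2.1 : ℝ) ∧
      (∀ y : X, dist y (denseSeq X p.1) < (p.2.2 : ℝ) → y ∈ U) := by
    rintro ⟨x, hx⟩
    obtain ⟨ε, hε, hball⟩ := Metric.isOpen_iff.mp hU x (hKU hx)
    obtain ⟨m, hm⟩ := (denseRange_denseSeq X).exists_dist_lt x (by positivity : (0:ℝ) < ε/8)
    obtain ⟨r, hr1, hr2⟩ := exists_rat_btwn (show (ε/8 : ℝ) < ε/4 by linarith)
    obtain ⟨s, hs1, hs2⟩ := exists_rat_btwn (show (ε/4 : ℝ) < ε/2 by linarith)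
    refine ⟨(m, r, s), ?_, ?_, ?_⟩
    · exact_mod_cast lt_trans hr2 hs1
    · exact lt_trans hm hr1
    · intro y hy
      apply hball
      have : dist y x ≤ dist y (denseSeq X m) + dist (denseSeq X m) x := dist_triangle _ _ _
      have hmx : dist (denseSeq X m) x < ε/8 := by rwa [dist_comm]
      have : dist y x < ε := by
        have := lt_trans hy hs2
        calc dist y x ≤ dist y (denseSeq X m) + dist (denseSeq X m) x := dist_triangle _ _ _
        _ < ε/2 + ε/8 := by exact add_lt_add this hmx
        _ < ε := by linarith
      exact Metric.mem_ball.mpr this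
  choose p hp1 hp2 hp3 using hsel
  have hcover : K ⊆ ⋃ i : K, Metric.ball (denseSeq X (p i).1) ((p i).2.1 : ℝ) := by
    intro x hx
    exact Set.mem_iUnion.mpr ⟨⟨x, hx⟩, Metric.mem_ball.mpr (hp2 ⟨x, hx⟩)⟩
  obtain ⟨t, ht⟩ := hK.elim_finite_subcover _ (fun i => Metric.isOpen_ball) hcover
  refine ⟨t.image p, ?_, ?_⟩
  · intro x hx
    obtain ⟨i, hi, hxi⟩ := Set.mem_iUnion₂.mp (ht hx)
    have h1 : bump (p i) x = 1 :=
      bump_eq_one _ _ (hp1 i) (le_of_lt (Metric.mem_ball.mp hxi))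
    have hmem : p i ∈ t.image p := Finset.mem_image_of_mem p hi
    have hle : (1:ℝ) ≤ FS (t.image p) x := by
      have := le_FS_of_mem hmem x
      rw [h1] at this; simpa using this
    exact le_antisymm (FS_le_one _ _) hle
  · intro x hxU
    apply FS_eq_zero
    intro q hq
    obtain ⟨i, _, rfl⟩ := Finset.mem_image.mp hq
    apply bump_eq_zero _ _ (hp1 i)
    by_contra hlt
    push_neg at hlt
    exact hxU (hp3 i x hlt)

/-- `FS S` as a bounded continuous function. -/
noncomputable def fbS (S : Finset (ℕ × ℚ × ℚ)) : X →ᵇ ℝ :=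
  ⟨⟨fun x => FS S x, FS_continuous S⟩, ⟨1, fun x y => by
    have hx0 := FS_nonneg S x; have hx1 := FS_le_one S x
    have hy0 := FS_nonneg S y; have hy1 := FS_le_one S y
    rw [Real.dist_eq, abs_sub_le_iff]; constructor <;> linarith⟩⟩

@[simp] lemma fbS_apply (S : Finset (ℕ × ℚ × ℚ)) (x : X) : fbS S x = FS S x := rfl


variable [MeasurableSpace X] [BorelSpace X]

theorem exists_weak_limit (ms : ℕ → Measure X) [hms : ∀ k, IsProbabilityMeasure (ms k)]
    (tight : ∀ θ : ℝ, 0 < θ → ∃ K : Set X, IsCompact K ∧ ∀ k, 1 - θ ≤ ((ms k) K).toReal) :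
    ∃ (μ : Measure X) (φ : ℕ → ℕ), IsProbabilityMeasure μ ∧ StrictMono φ ∧
      ∀ f : X →ᵇ ℝ, Tendsto (fun j => ∫ x, f x ∂(ms (φ j))) atTop (𝓝 (∫ x, f x ∂μ)) := by
  classical
  -- the integral data
  set v : ℕ → Finset (ℕ × ℚ × ℚ) → ℝ := fun k S => ∫ x, FS S x ∂(ms k) with hv_def
  have hint : ∀ (k : ℕ) (S : Finset (ℕ × ℚ × ℚ)), Integrable (fun x => FS S x) (ms k) := by
    intro k S
    have := (fbS S).integrable (ms k)
    have heq : (⇑(fbS S) : X → ℝ) = fun x => FS S x := funext fun x => fbS_apply S x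
    rwa [heq] at this
  have hv01 : ∀ k S, v k S ∈ Set.Icc (0:ℝ) 1 := by
    intro k S
    constructor
    · exact integral_nonneg fun x => FS_nonneg S x
    · have h1 : (fun x : X => FS S x) ≤ fun _ => (1:ℝ) := fun x => FS_le_one S x
      have := integral_mono (hint k S) (integrable_const 1) h1
      simpa [measure_univ] using this
  -- extract a subsequence along which all the integrals converge
  have hcpt : IsCompact (Set.univ.pi fun _ : Finset (ℕ × ℚ × ℚ) => Set.Icc (0:ℝ) 1) :=
    isCompact_univ_pi fun _ => isCompact_Icc
  obtain ⟨a, ha, φ, hφ, hconv⟩ := hcpt.tendsto_subseq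
    (x := fun k => v k) (fun k => by intro S _; exact hv01 k S)
  have haS : ∀ S, Tendsto (fun j => v (φ j) S) atTop (𝓝 (a S)) := by
    intro S
    exact (tendsto_pi_nhds.mp hconv) S
  have ha0 : ∀ S, 0 ≤ a S := fun S => (ha S (Set.mem_univ S)).1
  have ha1 : ∀ S, a S ≤ 1 := fun S => (ha S (Set.mem_univ S)).2
  -- comparison of integrals with measures of sets
  have hadm_int : ∀ (K : Set X), MeasurableSet K → ∀ (S : Finset (ℕ × ℚ × ℚ)),
      (∀ x ∈ K, 1 ≤ FS S x) → ∀ k, ((ms k) K).toReal ≤ v k S := by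
    intro K hKm S hS k
    have hle : K.indicator (fun _ => (1:ℝ)) ≤ fun x => FS S x := by
      intro x
      by_cases hx : x ∈ K
      · simpa [Set.indicator_of_mem hx] using hS x hx
      · simpa [Set.indicator_of_notMem hx] using FS_nonneg S x
    have := integral_mono ((integrable_const (1:ℝ)).indicator hKm) (hint k S) hle
    rwa [integral_indicator_const (1:ℝ) hKm, smul_eq_mul, mul_one] at this
  have hsupp_int : ∀ (G : Set X), IsOpen G → ∀ (S : Finset (ℕ × ℚ × ℚ)),
      (∀ x, x ∉ G → FS S x = 0) → ∀ k, v k S ≤ ((ms k) G).toReal := by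
    intro G hG S hS k
    have hle : (fun x : X => FS S x) ≤ G.indicator (fun _ => (1:ℝ)) := by
      intro x
      by_cases hx : x ∈ G
      · simpa [Set.indicator_of_mem hx] using FS_le_one S x
      · simp [Set.indicator_of_notMem hx, hS x hx]
    have := integral_mono (hint k S) ((integrable_const (1:ℝ)).indicator hG.measurableSet) hle
    rwa [integral_indicator_const (1:ℝ) hG.measurableSet, smul_eq_mul, mul_one] at this
  -- max inequality
  have haddmax : ∀ S T, a (S ∪ T) ≤ a S + a T := by
    intro S T
    refine le_of_tendsto_of_tendsto' (haS (S ∪ T)) ((haS S).add (haS T)) fun j => ?_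
    have hptw : (fun x : X => FS (S ∪ T) x) ≤ fun x : X => FS S x + FS T x := by
      intro x
      show FS (S ∪ T) x ≤ FS S x + FS T x
      rw [FS_union]
      exact max_le (le_add_of_nonneg_right (FS_nonneg T x)) (le_add_of_nonneg_left (FS_nonneg S x))
    have := integral_mono (hint (φ j) (S ∪ T)) ((hint (φ j) S).add (hint (φ j) T)) hptw
    simpa [integral_add (hint (φ j) S) (hint (φ j) T)] using this
  -- the content
  set adm : Set X → Set ℝ :=
    fun K => (fun S => a S) '' {S : Finset (ℕ × ℚ × ℚ) | ∀ x ∈ K, 1 ≤ FS S x} with hadm_def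
  have hadm_ne : ∀ K : Set X, IsCompact K → (adm K).Nonempty := by
    intro K hK
    obtain ⟨S, h1, _⟩ := exists_FS K Set.univ hK isOpen_univ (Set.subset_univ K)
    exact ⟨a S, ⟨S, fun x hx => (h1 x hx).ge, rfl⟩⟩
  have hadm_bdd : ∀ K, BddBelow (adm K) := by
    rintro K
    exact ⟨0, by rintro t ⟨S, _, rfl⟩; exact ha0 S⟩
  set Λ : Set X → ℝ := fun K => sInf (adm K) with hΛ_def
  have hΛ_le : ∀ (K : Set X) (S : Finset (ℕ × ℚ × ℚ)), (∀ x ∈ K, 1 ≤ FS S x) → Λ K ≤ a S :=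
    fun K S hS => csInf_le (hadm_bdd K) ⟨S, hS, rfl⟩
  have hΛmono : ∀ K₁ K₂ : Set X, IsCompact K₂ → K₁ ⊆ K₂ → Λ K₁ ≤ Λ K₂ := by
    intro K₁ K₂ hK₂ hsub
    refine le_csInf (hadm_ne K₂ hK₂) ?_
    rintro t ⟨S, hS, rfl⟩
    exact hΛ_le K₁ S fun x hx => hS x (hsub hx)
  have hΛ_addle : ∀ K₁ K₂ : Set X, IsCompact K₁ → IsCompact K₂ →
      Λ (K₁ ∪ K₂) ≤ Λ K₁ + Λ K₂ := by
    intro K₁ K₂ hK₁ hK₂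
    refine le_of_forall_pos_le_add fun ε hε => ?_
    obtain ⟨t₁, ⟨S₁, hS₁, rfl⟩, h₁⟩ := exists_lt_of_csInf_lt (hadm_ne K₁ hK₁)
      (lt_add_of_pos_right (Λ K₁) (half_pos hε))
    obtain ⟨t₂, ⟨S₂, hS₂, rfl⟩, h₂⟩ := exists_lt_of_csInf_lt (hadm_ne K₂ hK₂)
      (lt_add_of_pos_right (Λ K₂) (half_pos hε))
    have hadm : ∀ x ∈ K₁ ∪ K₂, 1 ≤ FS (S₁ ∪ S₂) x := by
      rintro x (hx | hx) <;> rw [FS_union]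
      · exact le_trans (hS₁ x hx) (le_max_left _ _)
      · exact le_trans (hS₂ x hx) (le_max_right _ _)
    have := hΛ_le _ _ hadm
    have h3 := haddmax S₁ S₂
    linarith
  -- disjoint additivity
  have hΛ_disj : ∀ K₁ K₂ : Set X, IsCompact K₁ → IsCompact K₂ → Disjoint K₁ K₂ →
      Λ K₁ + Λ K₂ ≤ Λ (K₁ ∪ K₂) := by
    intro K₁ K₂ hK₁ hK₂ hd
    refine le_csInf (hadm_ne _ (hK₁.union hK₂)) ?_
    rintro t ⟨T, hT, rfl⟩
    refine le_of_forall_pos_le_add fun ε' hε' => ?_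
    set ε : ℝ := min (ε'/2) (1/2) with hε_def
    have hε0 : 0 < ε := lt_min (half_pos hε') (by norm_num)
    have hεle : ε ≤ 1/2 := min_le_right _ _
    have h1ε : 0 < 1 - ε := by linarith
    obtain ⟨δ, hδ0, hδdisj⟩ := hd.exists_thickenings hK₁ hK₂.isClosed
    set V₁ : Set X := Metric.thickening δ K₁ ∩ {x | 1 - ε < FS T x} with hV₁_def
    set V₂ : Set X := Metric.thickening δ K₂ ∩ {x | 1 - ε < FS T x} with hV₂_def
    have hV₁o : IsOpen V₁ :=
      Metric.isOpen_thickening.inter (isOpen_lt continuous_const (FS_continuous T))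
    have hV₂o : IsOpen V₂ :=
      Metric.isOpen_thickening.inter (isOpen_lt continuous_const (FS_continuous T))
    have hKV₁ : K₁ ⊆ V₁ := fun x hx =>
      ⟨Metric.self_subset_thickening hδ0 _ hx, by have := hT x (Or.inl hx); simp only [Set.mem_setOf_eq]; linarith⟩
    have hKV₂ : K₂ ⊆ V₂ := fun x hx =>
      ⟨Metric.self_subset_thickening hδ0 _ hx, by have := hT x (Or.inr hx); simp only [Set.mem_setOf_eq]; linarith⟩
    have hVd : Disjoint V₁ V₂ :=
      hδdisj.mono Set.inter_subset_left Set.inter_subset_left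
    obtain ⟨S₁, hS₁one, hS₁zero⟩ := exists_FS K₁ V₁ hK₁ hV₁o hKV₁
    obtain ⟨S₂, hS₂one, hS₂zero⟩ := exists_FS K₂ V₂ hK₂ hV₂o hKV₂
    have key : ∀ x : X, FS S₁ x + FS S₂ x ≤ (1-ε)⁻¹ * FS T x := by
      intro x
      by_cases h₁x : x ∈ V₁
      · have hx2 : x ∉ V₂ := fun h => (Set.disjoint_left.mp hVd h₁x) h
        rw [hS₂zero x hx2]
        have hT' : 1 - ε < FS T x := h₁x.2
        have hb : (1:ℝ) ≤ (1-ε)⁻¹ * FS T x := by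
          have h := mul_le_mul_of_nonneg_left hT'.le (inv_nonneg.mpr h1ε.le)
          rwa [inv_mul_cancel₀ h1ε.ne'] at h
        have := FS_le_one S₁ x
        linarith
      · by_cases h₂x : x ∈ V₂
        · rw [hS₁zero x h₁x]
          have hT' : 1 - ε < FS T x := h₂x.2
          have hb : (1:ℝ) ≤ (1-ε)⁻¹ * FS T x := by
            have h := mul_le_mul_of_nonneg_left hT'.le (inv_nonneg.mpr h1ε.le)
            rwa [inv_mul_cancel₀ h1ε.ne'] at h
          have := FS_le_one S₂ x
          linarith
        · rw [hS₁zero x h₁x, hS₂zero x h₂x]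
          have h0 := FS_nonneg T x
          have : (0:ℝ) ≤ (1-ε)⁻¹ * FS T x := mul_nonneg (inv_nonneg.mpr h1ε.le) h0
          linarith
    have hvv : ∀ j, v (φ j) S₁ + v (φ j) S₂ ≤ (1-ε)⁻¹ * v (φ j) T := by
      intro j
      have hrw : (1-ε)⁻¹ * v (φ j) T = ∫ x, (1-ε)⁻¹ * FS T x ∂(ms (φ j)) := by
        rw [integral_const_mul]
      have := integral_mono ((hint (φ j) S₁).add (hint (φ j) S₂))
        ((hint (φ j) T).const_mul _) (fun x => key x)
      calc v (φ j) S₁ + v (φ j) S₂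
          = ∫ x, (FS S₁ x + FS S₂ x) ∂(ms (φ j)) := (integral_add (hint (φ j) S₁) (hint (φ j) S₂)).symm
        _ ≤ ∫ x, (1-ε)⁻¹ * FS T x ∂(ms (φ j)) := this
        _ = (1-ε)⁻¹ * v (φ j) T := hrw.symm
    have hlim : a S₁ + a S₂ ≤ (1-ε)⁻¹ * a T :=
      le_of_tendsto_of_tendsto' ((haS S₁).add (haS S₂)) ((haS T).const_mul _) hvv
    have hΛ1 : Λ K₁ ≤ a S₁ := hΛ_le _ _ fun x hx => (hS₁one x hx).ge
    have hΛ2 : Λ K₂ ≤ a S₂ := hΛ_le _ _ fun x hx => (hS₂one x hx).ge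
    have hfin : (1-ε)⁻¹ * a T ≤ a T + ε' := by
      rw [inv_mul_le_iff₀ h1ε]
      have h2ε : 2*ε ≤ ε' := by
        have := min_le_left (ε'/2) (1/2); rw [← hε_def] at this; linarith
      nlinarith [ha0 T, ha1 T]
    linarith
  -- build the content
  let C : Content X :=
    { toFun := fun K => Real.toNNReal (Λ K)
      mono' := fun K₁ K₂ h => Real.toNNReal_mono (hΛmono _ _ K₂.2 h)
      sup_disjoint' := by
        intro K₁ K₂ hd _ _
        show (Λ ↑(K₁ ⊔ K₂)).toNNReal = (Λ ↑K₁).toNNReal + (Λ ↑K₂).toNNReal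
        have h1 : Λ (↑(K₁ ⊔ K₂) : Set X) = Λ ↑K₁ + Λ ↑K₂ := by
          rw [Compacts.coe_sup]
          exact le_antisymm (hΛ_addle _ _ K₁.2 K₂.2) (hΛ_disj _ _ K₁.2 K₂.2 hd)
        have h0 : 0 ≤ Λ (↑K₁ : Set X) := le_csInf (hadm_ne _ K₁.2) (by rintro t ⟨S, _, rfl⟩; exact ha0 S)
        have h0' : 0 ≤ Λ (↑K₂ : Set X) := le_csInf (hadm_ne _ K₂.2) (by rintro t ⟨S, _, rfl⟩; exact ha0 S)
        rw [h1, Real.toNNReal_add h0 h0']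
      sup_le' := by
        intro K₁ K₂
        have h1 : Λ (↑(K₁ ⊔ K₂) : Set X) ≤ Λ ↑K₁ + Λ ↑K₂ := by
          rw [Compacts.coe_sup]; exact hΛ_addle _ _ K₁.2 K₂.2
        exact le_trans (Real.toNNReal_mono h1) Real.toNNReal_add_le }
  set μL : Measure X := C.measure with hμL_def
  have hopensμ : ∀ (G : Set X) (hG : IsOpen G), μL G = C.innerContent ⟨G, hG⟩ := by
    intro G hG
    rw [hμL_def, Content.measure_apply _ hG.measurableSet]
    exact C.outerMeasure_opens ⟨G, hG⟩
  -- portmanteau inequality for open sets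
  have hopen : ∀ G : Set X, IsOpen G → μL G ≤ liminf (fun j => ms (φ j) G) atTop := by
    intro G hG
    rw [hopensμ G hG]
    refine iSup₂_le ?_
    intro K hKG
    obtain ⟨S, hS1, hS0⟩ := exists_FS ↑K G K.2 hG hKG
    have hΛK : Λ ↑K ≤ a S := hΛ_le _ _ fun x hx => (hS1 x hx).ge
    have h1 : (C K : ℝ≥0∞) ≤ ENNReal.ofReal (a S) := ENNReal.coe_le_coe.mpr (Real.toNNReal_mono hΛK)
    have hdom : ∀ j, ENNReal.ofReal (v (φ j) S) ≤ ms (φ j) G := by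
      intro j
      calc ENNReal.ofReal (v (φ j) S) ≤ ENNReal.ofReal ((ms (φ j) G).toReal) :=
            ENNReal.ofReal_le_ofReal (hsupp_int G hG S hS0 (φ j))
        _ = ms (φ j) G := ENNReal.ofReal_toReal (measure_ne_top _ _)
    have hlim2 : Tendsto (fun j => ENNReal.ofReal (v (φ j) S)) atTop (𝓝 (ENNReal.ofReal (a S))) :=
      (ENNReal.continuous_ofReal.tendsto _).comp (haS S)
    have h2 : ENNReal.ofReal (a S) ≤ liminf (fun j => ms (φ j) G) atTop := by
      calc ENNReal.ofReal (a S) = liminf (fun j => ENNReal.ofReal (v (φ j) S)) atTop :=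
            hlim2.liminf_eq.symm
        _ ≤ liminf (fun j => ms (φ j) G) atTop := liminf_le_liminf (Eventually.of_forall hdom)
    exact h1.trans h2
  -- μL is a probability measure
  have hle1 : μL Set.univ ≤ 1 := by
    have := hopen Set.univ isOpen_univ
    simpa [measure_univ, liminf_const] using this
  have hge1 : 1 ≤ μL Set.univ := by
    have key : ∀ θ : ℝ, 0 < θ → ENNReal.ofReal (1 - θ) ≤ μL Set.univ := by
      intro θ hθ
      obtain ⟨K, hKc, hKb⟩ := tight θ hθ
      have hΛK : 1 - θ ≤ Λ K := by
        refine le_csInf (hadm_ne K hKc) ?_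
        rintro t ⟨S, hSadm, rfl⟩
        refine ge_of_tendsto (haS S) (Eventually.of_forall fun j => ?_)
        exact le_trans (hKb (φ j)) (hadm_int K hKc.isClosed.measurableSet S hSadm (φ j))
      have h1 : ENNReal.ofReal (1 - θ) ≤ (C ⟨K, hKc⟩ : ℝ≥0∞) :=
        ENNReal.coe_le_coe.mpr (Real.toNNReal_mono hΛK)
      have h2 : (C ⟨K, hKc⟩ : ℝ≥0∞) ≤ μL Set.univ := by
        rw [hopensμ Set.univ isOpen_univ]
        exact C.le_innerContent ⟨K, hKc⟩ ⟨Set.univ, isOpen_univ⟩ (Set.subset_univ _)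
      exact h1.trans h2
    have hlim : Tendsto (fun m : ℕ => ENNReal.ofReal (1 - 1/(m+1))) atTop
        (𝓝 (ENNReal.ofReal 1)) :=
      (ENNReal.continuous_ofReal.tendsto _).comp
        (by simpa using (tendsto_const_nhds.sub tendsto_one_div_add_atTop_nhds_zero_nat :
          Tendsto (fun m : ℕ => (1:ℝ) - 1/(m+1)) atTop (𝓝 (1 - 0))))
    have := le_of_tendsto' hlim fun m => key (1/(m+1)) (by positivity)
    simpa using this
  haveI hprob : IsProbabilityMeasure μL := ⟨le_antisymm hle1 hge1⟩
  -- weak convergence of the subsequence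
  let Pμ : ProbabilityMeasure X := ⟨μL, hprob⟩
  let Ps : ℕ → ProbabilityMeasure X := fun j => ⟨ms (φ j), hms (φ j)⟩
  have hws : Tendsto Ps atTop (𝓝 Pμ) := by
    apply tendsto_of_forall_isOpen_le_liminf
    intro G hG
    have aux : ENNReal.ofNNReal (liminf (fun j => Ps j G) atTop) =
        liminf (ENNReal.ofNNReal ∘ fun j => Ps j G) atTop := by
      refine Monotone.map_liminf_of_continuousAt (F := atTop) ENNReal.coe_mono (fun j => Ps j G)
        ENNReal.continuous_coe.continuousAt ?_ ?_
      · exact IsBoundedUnder.isCoboundedUnder_ge ⟨1, by simp⟩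
      · exact ⟨0, by simp⟩
    rw [← ENNReal.coe_le_coe, aux]
    simp only [Function.comp_def, ProbabilityMeasure.ennreal_coeFn_eq_coeFn_toMeasure]
    exact hopen G hG
  have hint2 := ProbabilityMeasure.tendsto_iff_forall_integral_tendsto.mp hws
  exact ⟨μL, φ, hprob, hφ, fun f => hint2 f⟩


/-- Two finite Borel measures agreeing on integrals of all bounded continuous real
functions are equal. -/
lemma ext_bcf {α : Type} [MeasurableSpace α] [TopologicalSpace α] [HasOuterApproxClosed α]
    [BorelSpace α] (μ ν : Measure α) [IsFiniteMeasure μ] [IsFiniteMeasure ν]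
    (h : ∀ f : α →ᵇ ℝ, ∫ x, f x ∂μ = ∫ x, f x ∂ν) : μ = ν := by
  have key : ∀ f : α →ᵇ ℝ≥0, ∫⁻ x, (f x : ℝ≥0∞) ∂μ = ∫⁻ x, (f x : ℝ≥0∞) ∂ν := by
    intro f
    let g : α →ᵇ ℝ :=
      BoundedContinuousFunction.comp _ (isometry_subtype_coe).lipschitz f
    have h1 : ∫⁻ x, ((f x : ℝ≥0) : ℝ≥0∞) ∂μ = ENNReal.ofReal (∫ x, ((f x : ℝ≥0) : ℝ) ∂μ) :=
      lintegral_coe_eq_integral _ (g.integrable μ)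
    have h2 : ∫⁻ x, ((f x : ℝ≥0) : ℝ≥0∞) ∂ν = ENNReal.ofReal (∫ x, ((f x : ℝ≥0) : ℝ) ∂ν) :=
      lintegral_coe_eq_integral _ (g.integrable ν)
    rw [h1, h2]
    congr 1
    exact h g
  have := FiniteMeasure.ext_of_forall_lintegral_eq (μ := ⟨μ, ‹_›⟩) (ν := ⟨ν, ‹_›⟩) key
  exact congrArg FiniteMeasure.toMeasure this

instance stdGaussian_prob (n : ℕ) : IsProbabilityMeasure (stdGaussian n) :=
  by
    unfold stdGaussian
    exact Measure.isProbabilityMeasure_map (MeasurableEquiv.toLp 2 (Fin n → ℝ)).measurable.aemeasurable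


end SumGaussAux

/-- For a positive integer `q`, the set of distributions of random vectors in `ℝⁿ`
expressible as the sum of `q` standard Gaussian vectors is closed under weak convergence. -/
theorem statement_5 (q n : ℕ) (hq : 0 < q) (hn : 1 ≤ n)
    (μ : ℕ → Measure (EuclideanSpace ℝ (Fin n)))
    (ν : Measure (EuclideanSpace ℝ (Fin n))) (hν : IsProbabilityMeasure ν)
    (hμ : ∀ k, IsSumOfStdGaussians n q (μ k))
    (hconv : ∀ f : BoundedContinuousFunction (EuclideanSpace ℝ (Fin n)) ℝ,
      Tendsto (fun k => ∫ x, f x ∂(μ k)) atTop (nhds (∫ x, f x ∂ν))) :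
    IsSumOfStdGaussians n q ν := by
  classical
  choose Om mOm P Y hP hYm hYd hYs using hμ
  let ms : ℕ → Measure (Fin q → EuclideanSpace ℝ (Fin n)) := fun k =>
    @Measure.map _ _ (mOm k) _ (fun ω i => Y k i ω) (P k)
  have hmeas : ∀ k, @Measurable _ _ (mOm k) _ (fun ω (i : Fin q) => Y k i ω) := fun k => by
    letI := mOm k
    exact measurable_pi_lambda _ (hYm k)
  haveI hmsp : ∀ k, IsProbabilityMeasure (ms k) := fun k => by
    letI := mOm k
    haveI := hP k
    exact Measure.isProbabilityMeasure_map (hmeas k).aemeasurable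
  have hmarg : ∀ k (i : Fin q),
      Measure.map (fun x : Fin q → EuclideanSpace ℝ (Fin n) => x i) (ms k) = stdGaussian n := by
    intro k i
    letI := mOm k
    show Measure.map _ (Measure.map _ _) = _
    rw [Measure.map_map (measurable_pi_apply i) (hmeas k)]
    exact hYd k i
  have hsum_meas : Measurable (fun x : Fin q → EuclideanSpace ℝ (Fin n) => ∑ i, x i) :=
    Finset.measurable_sum _ fun i _ => measurable_pi_apply i
  have hsum : ∀ k,
      Measure.map (fun x : Fin q → EuclideanSpace ℝ (Fin n) => ∑ i, x i) (ms k) = μ k := by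
    intro k
    letI := mOm k
    show Measure.map _ (Measure.map _ _) = _
    rw [Measure.map_map hsum_meas (hmeas k)]
    exact hYs k
  -- tightness
  have tight : ∀ θ : ℝ, 0 < θ → ∃ K : Set (Fin q → EuclideanSpace ℝ (Fin n)),
      IsCompact K ∧ ∀ k, 1 - θ ≤ ((ms k) K).toReal := by
    intro θ hθ
    have hmeasball : ∀ m : ℕ,
        NullMeasurableSet ((Metric.closedBall (0 : EuclideanSpace ℝ (Fin n)) m)ᶜ)
          (stdGaussian n) :=
      fun m => (measurableSet_closedBall).compl.nullMeasurableSet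
    have hanti : Antitone fun m : ℕ =>
        (Metric.closedBall (0 : EuclideanSpace ℝ (Fin n)) m)ᶜ := by
      intro m m' hmm'
      exact Set.compl_subset_compl.mpr
        (Metric.closedBall_subset_closedBall (by exact_mod_cast hmm'))
    have hiempty : (⋂ m : ℕ, (Metric.closedBall (0 : EuclideanSpace ℝ (Fin n)) m)ᶜ) = ∅ := by
      ext x
      simp only [Set.mem_iInter, Set.mem_compl_iff, Metric.mem_closedBall, not_le,
        Set.mem_empty_iff_false, iff_false, not_forall, not_lt]
      obtain ⟨m, hm⟩ := exists_nat_ge (dist x 0)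
      exact ⟨m, hm⟩
    have htail : Tendsto
        (fun m : ℕ => (stdGaussian n) ((Metric.closedBall (0 : EuclideanSpace ℝ (Fin n)) m)ᶜ))
        atTop (𝓝 0) := by
      have := tendsto_measure_iInter_atTop hmeasball hanti ⟨0, measure_ne_top _ _⟩
      rwa [hiempty, measure_empty] at this
    have hθq : (0:ℝ≥0∞) < ENNReal.ofReal θ / q := by
      apply ENNReal.div_pos (by simpa using hθ)
      simp
    obtain ⟨m, hm⟩ := (htail.eventually_lt_const hθq).exists
    refine ⟨Set.univ.pi fun _ : Fin q => Metric.closedBall (0 : EuclideanSpace ℝ (Fin n)) m,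
      isCompact_univ_pi fun _ => isCompact_closedBall _ _, ?_⟩
    intro k
    set K : Set (Fin q → EuclideanSpace ℝ (Fin n)) :=
      Set.univ.pi fun _ : Fin q => Metric.closedBall (0 : EuclideanSpace ℝ (Fin n)) m with hK_def
    have hKm : MeasurableSet K :=
      ((isCompact_univ_pi fun _ : Fin q =>
        isCompact_closedBall (0 : EuclideanSpace ℝ (Fin n)) m).isClosed).measurableSet
    have hcomplsub : Kᶜ = ⋃ i : Fin q, (fun x : Fin q → EuclideanSpace ℝ (Fin n) => x i) ⁻¹'
        (Metric.closedBall (0 : EuclideanSpace ℝ (Fin n)) m)ᶜ := by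
      ext x
      simp [hK_def, Set.mem_pi, not_forall]
    have hcball : MeasurableSet ((Metric.closedBall (0 : EuclideanSpace ℝ (Fin n)) m)ᶜ) :=
      measurableSet_closedBall.compl
    have hterm : ∀ i : Fin q,
        (ms k) ((fun x : Fin q → EuclideanSpace ℝ (Fin n) => x i) ⁻¹'
          (Metric.closedBall (0 : EuclideanSpace ℝ (Fin n)) m)ᶜ)
        = (stdGaussian n) ((Metric.closedBall (0 : EuclideanSpace ℝ (Fin n)) m)ᶜ) := by
      intro i
      rw [← Measure.map_apply (measurable_pi_apply i) hcball, hmarg k i]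
    have hbound : (ms k) Kᶜ ≤ ENNReal.ofReal θ := by
      rw [hcomplsub]
      refine le_trans (measure_iUnion_le _) ?_
      have : ∀ i : Fin q, (ms k) ((fun x : Fin q → EuclideanSpace ℝ (Fin n) => x i) ⁻¹'
          (Metric.closedBall (0 : EuclideanSpace ℝ (Fin n)) m)ᶜ) ≤ ENNReal.ofReal θ / q := by
        intro i; rw [hterm i]; exact hm.le
      calc (∑' i : Fin q, (ms k) ((fun x : Fin q → EuclideanSpace ℝ (Fin n) => x i) ⁻¹'
            (Metric.closedBall (0 : EuclideanSpace ℝ (Fin n)) m)ᶜ))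
          ≤ ∑' _ : Fin q, ENNReal.ofReal θ / q := ENNReal.tsum_le_tsum this
        _ = q * (ENNReal.ofReal θ / q) := by
            rw [tsum_fintype]; simp [Finset.sum_const, Fintype.card_fin, nsmul_eq_mul]
        _ ≤ ENNReal.ofReal θ := ENNReal.mul_div_le
    have hKfin : (ms k) K ≠ ∞ := measure_ne_top _ _
    have hKcfin : (ms k) Kᶜ ≠ ∞ := measure_ne_top _ _
    have hadd : ((ms k) K).toReal + ((ms k) Kᶜ).toReal = 1 := by
      have := measure_add_measure_compl (μ := ms k) hKm
      rw [measure_univ] at this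
      have h2 := congrArg ENNReal.toReal this
      rwa [ENNReal.toReal_add hKfin hKcfin, ENNReal.toReal_one] at h2
    have hcle : ((ms k) Kᶜ).toReal ≤ θ := ENNReal.toReal_le_of_le_ofReal hθ.le hbound
    linarith
  obtain ⟨ρ, φ, hρ, hφm, hlim⟩ := SumGaussAux.exists_weak_limit ms tight
  refine ⟨Fin q → EuclideanSpace ℝ (Fin n), inferInstance, ρ, fun i x => x i, hρ,
    fun i => measurable_pi_apply i, ?_, ?_⟩
  · intro i
    haveI : IsProbabilityMeasure
        (Measure.map (fun x : Fin q → EuclideanSpace ℝ (Fin n) => x i) ρ) :=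
      Measure.isProbabilityMeasure_map (measurable_pi_apply i).aemeasurable
    apply SumGaussAux.ext_bcf
    intro f
    rw [integral_map (measurable_pi_apply i).aemeasurable f.continuous.aestronglyMeasurable]
    have h2 := hlim (f.compContinuous
      ⟨fun x : Fin q → EuclideanSpace ℝ (Fin n) => x i, continuous_apply i⟩)
    have h3 : ∀ j, (∫ x, (f.compContinuous
        ⟨fun x : Fin q → EuclideanSpace ℝ (Fin n) => x i, continuous_apply i⟩) x ∂(ms (φ j)))
        = ∫ x, f x ∂(stdGaussian n) := by
      intro j
      rw [← hmarg (φ j) i,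
        integral_map (measurable_pi_apply i).aemeasurable f.continuous.aestronglyMeasurable]
      rfl
    simp only [h3] at h2
    exact tendsto_nhds_unique h2 tendsto_const_nhds
  · haveI : IsProbabilityMeasure
        (Measure.map (fun ω : Fin q → EuclideanSpace ℝ (Fin n) => ∑ i, ω i) ρ) :=
      Measure.isProbabilityMeasure_map hsum_meas.aemeasurable
    show Measure.map (fun ω : Fin q → EuclideanSpace ℝ (Fin n) => ∑ i, ω i) ρ = ν
    apply SumGaussAux.ext_bcf
    intro f
    rw [integral_map hsum_meas.aemeasurable f.continuous.aestronglyMeasurable]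
    have h2 := hlim (f.compContinuous
      ⟨fun x : Fin q → EuclideanSpace ℝ (Fin n) => ∑ i, x i,
        continuous_finset_sum _ fun i _ => continuous_apply i⟩)
    have h3 : ∀ j, (∫ x, (f.compContinuous
        ⟨fun x : Fin q → EuclideanSpace ℝ (Fin n) => ∑ i, x i,
          continuous_finset_sum _ fun i _ => continuous_apply i⟩) x ∂(ms (φ j)))
        = ∫ x, f x ∂(μ (φ j)) := by
      intro j
      rw [← hsum (φ j), integral_map hsum_meas.aemeasurable f.continuous.aestronglyMeasurable]
      rfl
    simp only [h3] at h2
    have h4 : Tendsto (fun j => ∫ x, f x ∂(μ (φ j))) atTop (𝓝 (∫ x, f x ∂ν)) :=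
      (hconv f).comp hφm.tendsto_atTop
    exact tendsto_nhds_unique h2 h4
end

section
/- Let μ = Σ_{i=1}^m p_i δ_{x_i} be a centered probability measure on ℝⁿ (with p_i > 0 summing to 1) and let ν be a centered probability measure on ℝⁿ with a density and finite first moment, not supported on any hyperplane. Let Y ∼ ν. Then there exists a martingale coupling (X, Y) of μ and ν (i.e. X ∼ μ, Y ∼ ν, E[Y | X] = X) if and only if there exist nonnegative measurable functions f₁, …, f_m : ℝⁿ → ℝ satisfying Σ_{i=1}^m p_i f_i(x) = 1 for all x, E[f_i(Y)] = 1 for each i, and E[Y f_i(Y)] = x_i for each i. -/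
open MeasureTheory Real
open scoped RealInnerProductSpace ENNReal NNReal

noncomputable section

namespace Stmt11Aux

abbrev En (n : ℕ) := EuclideanSpace ℝ (Fin n)


lemma bwd (n m : ℕ)
    (p : Fin m → ℝ) (x : Fin m → En n)
    (hp : ∀ i, 0 < p i) (hpsum : ∑ i, p i = 1)
    (ν : Measure (En n)) (hν : IsProbabilityMeasure ν)
    (hmom : Integrable (fun y => y) ν)
    (f : Fin m → En n → ℝ)
    (hfm : ∀ i, Measurable (f i)) (hf0 : ∀ i y, 0 ≤ f i y)
    (hfsum : ∀ y, ∑ i, p i * f i y = 1)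
    (hf1 : ∀ i, ∫ y, f i y ∂ν = 1) (hfx : ∀ i, ∫ y, f i y • y ∂ν = x i) :
    ∃ (Ω : Type) (mΩ : MeasurableSpace Ω) (P : Measure Ω)
       (X Y : Ω → En n),
       IsProbabilityMeasure P ∧ Measurable X ∧ Measurable Y ∧ Integrable Y P ∧
       Measure.map X P = ∑ i, ENNReal.ofReal (p i) • Measure.dirac (x i) ∧
       Measure.map Y P = ν ∧
       P[Y | MeasurableSpace.comap X (by infer_instance)] =ᵐ[P] X := by
  classical
  -- integrability of each f i
  have hfi_int : ∀ i, Integrable (f i) ν := by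
    intro i
    by_contra h
    have := hf1 i
    rw [integral_undef h] at this
    exact one_ne_zero this.symm
  -- the density as an ℝ≥0 function
  set g : Fin m → En n → ℝ≥0 := fun i y => (f i y).toNNReal with hg
  have hgm : ∀ i, Measurable (g i) := fun i => (hfm i).real_toNNReal
  have hgf : ∀ i y, ((g i y : ℝ≥0) : ℝ) = f i y := fun i y => Real.coe_toNNReal _ (hf0 i y)
  have hgof : ∀ i, (fun y => ((g i y : ℝ≥0) : ℝ≥0∞)) = fun y => ENNReal.ofReal (f i y) := by
    intro i; funext y; simp [hg, ENNReal.ofReal]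
  set νi : Fin m → Measure (En n) := fun i => ν.withDensity (fun y => ((g i y : ℝ≥0) : ℝ≥0∞))
    with hνi
  have hνi_univ : ∀ i, νi i Set.univ = 1 := by
    intro i
    have h1 : νi i Set.univ = ∫⁻ y, ((g i y : ℝ≥0) : ℝ≥0∞) ∂ν := by
      simp [hνi, withDensity_apply _ MeasurableSet.univ]
    have h2 : ∫⁻ y, ENNReal.ofReal (f i y) ∂ν = ENNReal.ofReal (∫ y, f i y ∂ν) :=
      (ofReal_integral_eq_lintegral_ofReal (hfi_int i)
        (Filter.Eventually.of_forall (hf0 i))).symm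
    rw [h1, hgof i, h2, hf1 i, ENNReal.ofReal_one]
  have hνi_prob : ∀ i, IsProbabilityMeasure (νi i) := fun i => ⟨hνi_univ i⟩
  set P : Measure (Fin m × En n) :=
    ∑ i, ENNReal.ofReal (p i) • (νi i).map (Prod.mk i) with hPdef
  set X : Fin m × En n → En n := fun ω => x ω.1 with hX
  set Y : Fin m × En n → En n := Prod.snd with hY
  have hXm : Measurable X := measurable_from_top.comp measurable_fst
  have hYm : Measurable Y := measurable_snd
  have hmk : ∀ i : Fin m, Measurable (Prod.mk i : En n → Fin m × En n) := fun i =>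
    measurable_prodMk_left
  have hofreal_sum : ∑ i, ENNReal.ofReal (p i) = 1 := by
    rw [← ENNReal.ofReal_sum_of_nonneg (fun i _ => (hp i).le), hpsum, ENNReal.ofReal_one]
  have hPprob : IsProbabilityMeasure P := by
    constructor
    rw [hPdef, Measure.finset_sum_apply]
    have : ∀ i : Fin m,
        (ENNReal.ofReal (p i) • (νi i).map (Prod.mk i)) Set.univ = ENNReal.ofReal (p i) := by
      intro i
      rw [Measure.smul_apply, Measure.map_apply (hmk i) MeasurableSet.univ,
        Set.preimage_univ, hνi_univ, smul_eq_mul, mul_one]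
    calc ∑ i, (ENNReal.ofReal (p i) • (νi i).map (Prod.mk i)) Set.univ
        = ∑ i, ENNReal.ofReal (p i) := Finset.sum_congr rfl fun i _ => this i
      _ = 1 := hofreal_sum
  -- bound f i ≤ (p i)⁻¹
  have hub : ∀ i y, f i y ≤ (p i)⁻¹ := by
    intro i y
    have h1 : p i * f i y ≤ 1 := by
      rw [← hfsum y]
      exact Finset.single_le_sum (fun j _ => mul_nonneg (hp j).le (hf0 j y))
        (Finset.mem_univ i)
    rw [← one_div, le_div_iff₀ (hp i), mul_comm]
    exact h1
  have hsmul_int : ∀ i, Integrable (fun y => f i y • y) ν := by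
    intro i
    refine Integrable.mono' (hmom.norm.const_mul ((p i)⁻¹))
      (((hfm i).smul measurable_id).aestronglyMeasurable) ?_
    filter_upwards with y
    rw [norm_smul]
    refine mul_le_mul ?_ le_rfl (norm_nonneg y) (inv_nonneg.2 (hp i).le)
    rw [Real.norm_eq_abs, abs_of_nonneg (hf0 i y)]
    exact hub i y
  have hYνi : ∀ i, Integrable (fun y : En n => y) (νi i) := by
    intro i
    rw [hνi]
    rw [integrable_withDensity_iff_integrable_smul (hgm i)]
    have : (fun y : En n => (g i y : ℝ≥0) • y) = fun y => f i y • y := by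
      funext y
      rw [NNReal.smul_def, hgf]
    rw [this]
    exact hsmul_int i
  have hYmapint : ∀ i, Integrable Y ((νi i).map (Prod.mk i)) := by
    intro i
    rw [integrable_map_measure hYm.aestronglyMeasurable (hmk i).aemeasurable]
    exact hYνi i
  have hYint : Integrable Y P := by
    rw [hPdef, integrable_finset_sum_measure]
    intro i _
    exact (hYmapint i).smul_measure ENNReal.ofReal_ne_top
  haveI := hPprob
  haveI := fun i => hνi_prob i
  -- law of X
  have hmapX : Measure.map X P = ∑ i, ENNReal.ofReal (p i) • Measure.dirac (x i) := by
    ext s hs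
    rw [Measure.map_apply hXm hs, hPdef, Measure.finset_sum_apply, Measure.finset_sum_apply]
    refine Finset.sum_congr rfl fun i _ => ?_
    rw [Measure.smul_apply, Measure.smul_apply, Measure.map_apply (hmk i) (hXm hs),
      Measure.dirac_apply' _ hs]
    congr 1
    have hpre : (Prod.mk i : En n → Fin m × En n) ⁻¹' (X ⁻¹' s)
        = (fun _ : En n => x i) ⁻¹' s := rfl
    rw [hpre, Set.preimage_const]
    by_cases hxi : x i ∈ s
    · simp [hxi, hνi_univ i]
    · simp [hxi]
  -- law of Y
  have hmapY : Measure.map Y P = ν := by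
    ext s hs
    rw [Measure.map_apply hYm hs, hPdef, Measure.finset_sum_apply]
    have hterm : ∀ i : Fin m, (ENNReal.ofReal (p i) • (νi i).map (Prod.mk i)) (Y ⁻¹' s)
        = ∫⁻ y in s, ENNReal.ofReal (p i) * ENNReal.ofReal (f i y) ∂ν := by
      intro i
      rw [Measure.smul_apply, Measure.map_apply (hmk i) (hYm hs)]
      have hpre : (Prod.mk i : En n → Fin m × En n) ⁻¹' (Y ⁻¹' s) = s := rfl
      rw [hpre, hνi, withDensity_apply _ hs, hgof i, smul_eq_mul,
        ← lintegral_const_mul _ ((hfm i).ennreal_ofReal)]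
    calc ∑ i, (ENNReal.ofReal (p i) • (νi i).map (Prod.mk i)) (Y ⁻¹' s)
        = ∑ i, ∫⁻ y in s, ENNReal.ofReal (p i) * ENNReal.ofReal (f i y) ∂ν :=
          Finset.sum_congr rfl fun i _ => hterm i
      _ = ∫⁻ y in s, ∑ i, ENNReal.ofReal (p i) * ENNReal.ofReal (f i y) ∂ν :=
          (lintegral_finset_sum _ fun i _ =>
            (measurable_const.mul ((hfm i).ennreal_ofReal))).symm
      _ = ∫⁻ y in s, 1 ∂ν := by
          refine lintegral_congr fun y => ?_
          rw [Finset.sum_congr rfl fun i _ => (ENNReal.ofReal_mul (hp i).le).symm,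
            ← ENNReal.ofReal_sum_of_nonneg (fun i _ => mul_nonneg (hp i).le (hf0 i y)),
            hfsum y, ENNReal.ofReal_one]
      _ = ν s := by rw [setLIntegral_one]
  -- barycenters of the νi
  have hint_y : ∀ i, ∫ y, y ∂(νi i) = x i := by
    intro i
    rw [hνi]
    rw [integral_withDensity_eq_integral_smul (hgm i) (fun y => y)]
    have : (fun y : En n => (g i y : ℝ≥0) • y) = fun y => f i y • y := by
      funext y; rw [NNReal.smul_def, hgf]
    rw [this, hfx i]
  -- integrability of X
  have hXint : Integrable X P := by
    refine Integrable.mono' (integrable_const (∑ i, ‖x i‖)) hXm.aestronglyMeasurable ?_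
    filter_upwards with ω
    exact Finset.single_le_sum (f := fun i => ‖x i‖) (fun j _ => norm_nonneg _)
      (Finset.mem_univ ω.1)
  -- restriction decomposition
  have hres : ∀ (t : Set (En n)), P.restrict (X ⁻¹' t)
      = ∑ i, ENNReal.ofReal (p i) • (((νi i).map (Prod.mk i)).restrict (X ⁻¹' t)) := by
    intro t
    ext u hu
    simp only [hPdef, Measure.restrict_apply hu, Measure.finset_sum_apply,
      Measure.smul_apply, smul_eq_mul]
  -- the set-integral identity
  have key : ∀ (t : Set (En n)), MeasurableSet t →
      ∫ ω in X ⁻¹' t, X ω ∂P = ∫ ω in X ⁻¹' t, Y ω ∂P := by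
    intro t ht
    have hXon : ∀ i ∈ Finset.univ,
        Integrable X (ENNReal.ofReal (p i) • (((νi i).map (Prod.mk i)).restrict (X ⁻¹' t))) := by
      rw [← integrable_finset_sum_measure, ← hres]
      exact hXint.integrableOn
    have hYon : ∀ i ∈ Finset.univ,
        Integrable Y (ENNReal.ofReal (p i) • (((νi i).map (Prod.mk i)).restrict (X ⁻¹' t))) := by
      rw [← integrable_finset_sum_measure, ← hres]
      exact hYint.integrableOn
    rw [hres t, integral_finset_sum_measure hXon, integral_finset_sum_measure hYon]
    refine Finset.sum_congr rfl fun i _ => ?_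
    rw [integral_smul_measure, integral_smul_measure]
    congr 1
    rw [Measure.restrict_map (hmk i) (hXm ht)]
    have hpre : (Prod.mk i : En n → Fin m × En n) ⁻¹' (X ⁻¹' t)
        = (fun _ : En n => x i) ⁻¹' t := rfl
    rw [hpre, Set.preimage_const]
    by_cases hit : x i ∈ t
    · rw [if_pos hit, Measure.restrict_univ,
        integral_map (hmk i).aemeasurable hXm.aestronglyMeasurable,
        integral_map (hmk i).aemeasurable hYm.aestronglyMeasurable]
      have h1 : (fun y : En n => X (i, y)) = fun _ => x i := rfl
      have h2 : (fun y : En n => Y (i, y)) = fun y => y := rfl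
      rw [h1, h2, integral_const, hint_y i]
      simp
    · rw [if_neg hit, Measure.restrict_empty, Measure.map_zero, integral_zero_measure,
        integral_zero_measure]
  -- assemble
  refine ⟨Fin m × En n, inferInstance, P, X, Y, hPprob, hXm, hYm, hYint, hmapX, hmapY, ?_⟩
  have hle : MeasurableSpace.comap X (by infer_instance)
      ≤ (by infer_instance : MeasurableSpace (Fin m × En n)) := hXm.comap_le
  haveI : SigmaFinite (P.trim hle) := by infer_instance
  have hXmX : Measurable[MeasurableSpace.comap X (by infer_instance)] X :=
    fun s hs => ⟨s, hs, rfl⟩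
  refine (ae_eq_condExp_of_forall_setIntegral_eq hle hYint
    (fun s _ _ => hXint.integrableOn) ?_
    ⟨X, hXmX.stronglyMeasurable, Filter.EventuallyEq.rfl⟩).symm
  intro s hs _
  obtain ⟨t, ht, rfl⟩ := hs
  exact key t ht


lemma isFiniteMeasure_finset_sum {α : Type*} [MeasurableSpace α] {ι : Type*}
    (I : Finset ι) (ρ : ι → Measure α) (h : ∀ a, IsFiniteMeasure (ρ a)) :
    IsFiniteMeasure (∑ a ∈ I, ρ a) := by
  constructor
  rw [Measure.finset_sum_apply]
  exact ENNReal.sum_lt_top.2 fun a _ => measure_lt_top _ _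

lemma rnDeriv_finset_sum {α : Type*} [MeasurableSpace α] (ν : Measure α) [SigmaFinite ν]
    {ι : Type*} (I : Finset ι) (ρ : ι → Measure α) (h : ∀ a, IsFiniteMeasure (ρ a)) :
    (∑ a ∈ I, ρ a).rnDeriv ν =ᵐ[ν] fun y => ∑ a ∈ I, (ρ a).rnDeriv ν y := by
  classical
  induction I using Finset.induction with
  | empty =>
      simp only [Finset.sum_empty]
      exact Measure.rnDeriv_zero ν
  | @insert a I ha ih =>
      rw [Finset.sum_insert ha]
      haveI := h a
      haveI := isFiniteMeasure_finset_sum I ρ h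
      filter_upwards [Measure.rnDeriv_add (ρ a) (∑ b ∈ I, ρ b) ν, ih] with y h1 h2
      rw [h1, Pi.add_apply, h2, Finset.sum_insert ha]

lemma fwd (n m : ℕ) (p : Fin m → ℝ) (x : Fin m → En n)
    (hp : ∀ i, 0 < p i) (hpsum : ∑ i, p i = 1)
    (ν : Measure (En n)) (hν : IsProbabilityMeasure ν)
    (Ω : Type) (mΩ : MeasurableSpace Ω) (P : Measure Ω) (X Y : Ω → En n)
    (hP : IsProbabilityMeasure P) (hXm : Measurable X) (hYm : Measurable Y)
    (hYint : Integrable Y P)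
    (hmapX : Measure.map X P = ∑ i, ENNReal.ofReal (p i) • Measure.dirac (x i))
    (hmapY : Measure.map Y P = ν)
    (hcond : P[Y | MeasurableSpace.comap X (by infer_instance)] =ᵐ[P] X) :
    ∃ f : Fin m → En n → ℝ,
      (∀ i, Measurable (f i)) ∧ (∀ i y, 0 ≤ f i y) ∧
      (∀ y, ∑ i, p i * f i y = 1) ∧
      (∀ i, ∫ y, f i y ∂ν = 1) ∧ (∀ i, ∫ y, f i y • y ∂ν = x i) := by
  classical
  set A : Finset (En n) := Finset.image x Finset.univ with hA
  set ρ : En n → Measure (En n) := fun a => Measure.map Y (P.restrict (X ⁻¹' {a})) with hρ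
  set Q : En n → ℝ := fun a => ∑ i, if x i = a then p i else 0 with hQdef
  have hQnn : ∀ a, 0 ≤ Q a := by
    intro a
    refine Finset.sum_nonneg fun j _ => ?_
    by_cases h : x j = a <;> simp [h, (hp j).le]
  have hρ_le : ∀ a, ρ a ≤ ν := by
    intro a
    rw [hρ, ← hmapY]
    exact Measure.map_mono Measure.restrict_le_self hYm
  have hρfin : ∀ a, IsFiniteMeasure (ρ a) := fun a =>
    ⟨lt_of_le_of_lt (Measure.le_iff'.1 (hρ_le a) Set.univ) (measure_lt_top ν _)⟩
  have habs : ∀ a, ρ a ≪ ν := fun a => (hρ_le a).absolutelyContinuous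
  -- mass of atoms
  have hQx : ∀ a : En n, P (X ⁻¹' {a}) = ENNReal.ofReal (Q a) := by
    intro a
    rw [← Measure.map_apply hXm (measurableSet_singleton a), hmapX, Measure.finset_sum_apply]
    have hterm : ∀ i : Fin m, (ENNReal.ofReal (p i) • Measure.dirac (x i)) {a}
        = ENNReal.ofReal (if x i = a then p i else 0) := by
      intro i
      rw [Measure.smul_apply, Measure.dirac_apply' _ (measurableSet_singleton a), smul_eq_mul]
      by_cases h : x i = a
      · simp [Set.indicator_apply, h]
      · simp [Set.indicator_apply, h]
    rw [Finset.sum_congr rfl fun i _ => hterm i,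
      ← ENNReal.ofReal_sum_of_nonneg (fun i _ => by by_cases h : x i = a <;> simp [h, (hp i).le])]
  have hρuniv : ∀ a : En n, ρ a Set.univ = ENNReal.ofReal (Q a) := by
    intro a
    rw [hρ, Measure.map_apply hYm MeasurableSet.univ, Set.preimage_univ,
      Measure.restrict_apply_univ, hQx]
  have hQpos : ∀ i, 0 < Q (x i) := by
    intro i
    refine lt_of_lt_of_le (hp i) ?_
    have := Finset.single_le_sum (f := fun j => if x j = x i then p j else 0)
      (fun j _ => by by_cases h : x j = x i <;> simp [h, (hp j).le]) (Finset.mem_univ i)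
    simpa using this
  -- conditional expectation facts
  have hle : MeasurableSpace.comap X (by infer_instance)
      ≤ (mΩ : MeasurableSpace Ω) := hXm.comap_le
  haveI : SigmaFinite (P.trim hle) := by infer_instance
  have hsint : ∀ i, ∫ ω in X ⁻¹' {x i}, Y ω ∂P = Q (x i) • x i := by
    intro i
    have hsmeas : MeasurableSet[MeasurableSpace.comap X (by infer_instance)]
        (X ⁻¹' {x i}) := ⟨{x i}, measurableSet_singleton _, rfl⟩
    have h0 := setIntegral_condExp hle hYint hsmeas
    rw [← h0]
    have h1 : ∫ ω in X ⁻¹' {x i}, (P[Y | MeasurableSpace.comap X (by infer_instance)]) ω ∂P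
        = ∫ ω in X ⁻¹' {x i}, X ω ∂P := by
      refine setIntegral_congr_ae (hXm (measurableSet_singleton _)) ?_
      filter_upwards [hcond] with ω hω _
      exact hω
    have h2 : ∫ ω in X ⁻¹' {x i}, X ω ∂P = ∫ ω in X ⁻¹' {x i}, x i ∂P := by
      refine setIntegral_congr_fun (hXm (measurableSet_singleton _)) ?_
      intro ω hω
      simpa using hω
    rw [h1, h2, setIntegral_const, measureReal_def, hQx, ENNReal.toReal_ofReal (hQnn _)]
  have hρint : ∀ i, ∫ y, y ∂(ρ (x i)) = Q (x i) • x i := by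
    intro i
    have hrfl : ρ (x i) = Measure.map Y (P.restrict (X ⁻¹' {x i})) := rfl
    rw [hrfl, integral_map (f := fun y : En n => y) hYm.aemeasurable aestronglyMeasurable_id]
    exact hsint i
  -- the raw densities
  set fraw : Fin m → En n → ℝ :=
    fun i y => ((ρ (x i)).rnDeriv ν y).toReal / Q (x i) with hfraw
  have hfraw_meas : ∀ i, Measurable (fraw i) := fun i =>
    (Measure.measurable_rnDeriv _ _).ennreal_toReal.div_const _
  have hfraw_nonneg : ∀ i y, 0 ≤ fraw i y := fun i y =>
    div_nonneg ENNReal.toReal_nonneg (hQnn _)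
  have hfraw_int1 : ∀ i, ∫ y, fraw i y ∂ν = 1 := by
    intro i
    haveI := hρfin (x i)
    rw [hfraw]
    simp only
    rw [integral_div, Measure.integral_toReal_rnDeriv (habs _), measureReal_def, hρuniv,
      ENNReal.toReal_ofReal (hQnn _), div_self (ne_of_gt (hQpos i))]
  have hfraw_intx : ∀ i, ∫ y, fraw i y • y ∂ν = x i := by
    intro i
    haveI := hρfin (x i)
    have h1 : (fun y => fraw i y • y)
        = fun y => (Q (x i))⁻¹ • (((ρ (x i)).rnDeriv ν y).toReal • y) := by
      funext y
      rw [smul_smul, hfraw]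
      simp only
      rw [div_eq_inv_mul]
    rw [h1, integral_smul, integral_rnDeriv_smul (habs _), hρint i, smul_smul,
      inv_mul_cancel₀ (ne_of_gt (hQpos i)), one_smul]
  -- sum of the atom measures is ν
  have hsum_meas : ∑ a ∈ A, ρ a = ν := by
    ext s hs
    rw [Measure.finset_sum_apply]
    have hterm : ∀ a, ρ a s = P (Y ⁻¹' s ∩ X ⁻¹' {a}) := by
      intro a
      rw [hρ, Measure.map_apply hYm hs, Measure.restrict_apply (hYm hs)]
    have hdisj : (A : Set (En n)).PairwiseDisjoint fun a => Y ⁻¹' s ∩ X ⁻¹' {a} := by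
      intro a _ b _ hab
      refine Set.disjoint_left.2 ?_
      rintro ω ⟨_, h1⟩ ⟨_, h2⟩
      exact hab ((Set.mem_singleton_iff.1 h1).symm.trans (Set.mem_singleton_iff.1 h2))
    have hmeas : ∀ b ∈ A, MeasurableSet (Y ⁻¹' s ∩ X ⁻¹' {b}) := fun b _ =>
      (hYm hs).inter (hXm (measurableSet_singleton b))
    have hunion : ⋃ a ∈ A, (Y ⁻¹' s ∩ X ⁻¹' {a}) = Y ⁻¹' s ∩ X ⁻¹' ↑A := by
      ext ω
      simp only [Set.mem_iUnion, Set.mem_inter_iff, Set.mem_preimage,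
        Set.mem_singleton_iff, Finset.mem_coe]
      constructor
      · rintro ⟨a, ha, hy, hxa⟩
        exact ⟨hy, hxa ▸ ha⟩
      · rintro ⟨hy, hXA⟩
        exact ⟨X ω, hXA, hy, rfl⟩
    have hnull : P ((X ⁻¹' ↑A)ᶜ) = 0 := by
      have hXA : P (X ⁻¹' ↑A) = 1 := by
        rw [← Measure.map_apply hXm A.measurableSet, hmapX, Measure.finset_sum_apply]
        have : ∀ i : Fin m, (ENNReal.ofReal (p i) • Measure.dirac (x i)) ↑A
            = ENNReal.ofReal (p i) := by
          intro i
          rw [Measure.smul_apply, Measure.dirac_apply' _ A.measurableSet, smul_eq_mul]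
          have hmem : x i ∈ (A : Set (En n)) := by
            simp [hA]
          rw [Set.indicator_of_mem hmem]
          simp
        rw [Finset.sum_congr rfl fun i _ => this i,
          ← ENNReal.ofReal_sum_of_nonneg (fun i _ => (hp i).le), hpsum, ENNReal.ofReal_one]
      rw [measure_compl (hXm A.measurableSet) (measure_ne_top _ _), hXA, measure_univ,
        tsub_self]
    calc ∑ a ∈ A, ρ a s = ∑ a ∈ A, P (Y ⁻¹' s ∩ X ⁻¹' {a}) :=
          Finset.sum_congr rfl fun a _ => hterm a
      _ = P (⋃ a ∈ A, (Y ⁻¹' s ∩ X ⁻¹' {a})) := (measure_biUnion_finset hdisj hmeas).symm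
      _ = P (Y ⁻¹' s ∩ X ⁻¹' ↑A) := by rw [hunion]
      _ = P (Y ⁻¹' s) := measure_inter_conull hnull
      _ = ν s := by rw [← hmapY, Measure.map_apply hYm hs]
  -- a.e. identity for the sum of densities
  have hae1 : ∀ᵐ y ∂ν, ∑ a ∈ A, (ρ a).rnDeriv ν y = 1 := by
    have h1 := rnDeriv_finset_sum ν A ρ hρfin
    rw [hsum_meas] at h1
    filter_upwards [h1.symm, Measure.rnDeriv_self ν] with y hy1 hy2
    rw [hy1, hy2]
  have hlt : ∀ᵐ y ∂ν, ∀ a ∈ A, (ρ a).rnDeriv ν y < ⊤ := by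
    rw [Filter.eventually_all_finset]
    intro a _
    haveI := hρfin a
    exact Measure.rnDeriv_lt_top _ _
  have hae : ∀ᵐ y ∂ν, ∑ j, p j * fraw j y = 1 := by
    filter_upwards [hae1, hlt] with y h1 h2
    calc ∑ j, p j * fraw j y
        = ∑ a ∈ A, ∑ j ∈ Finset.univ.filter (fun j => x j = a), p j * fraw j y :=
          (Finset.sum_fiberwise_of_maps_to
            (fun j _ => Finset.mem_image_of_mem x (Finset.mem_univ j)) _).symm
      _ = ∑ a ∈ A, Q a * (((ρ a).rnDeriv ν y).toReal / Q a) := by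
          refine Finset.sum_congr rfl fun a _ => ?_
          have hstep : ∀ j ∈ Finset.univ.filter (fun j => x j = a),
              p j * fraw j y = p j * (((ρ a).rnDeriv ν y).toReal / Q a) := by
            intro j hj
            rw [Finset.mem_filter] at hj
            rw [hfraw]
            simp only
            rw [hj.2]
          rw [Finset.sum_congr rfl hstep, ← Finset.sum_mul]
          congr 1
          simp only [hQdef]
          exact Finset.sum_filter _ _
      _ = ∑ a ∈ A, ((ρ a).rnDeriv ν y).toReal := by
          refine Finset.sum_congr rfl fun a ha => ?_
          obtain ⟨i, _, rfl⟩ := Finset.mem_image.1 ha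
          rw [mul_div_cancel₀ _ (ne_of_gt (hQpos i))]
      _ = (∑ a ∈ A, (ρ a).rnDeriv ν y).toReal :=
          (ENNReal.toReal_sum fun a ha => (h2 a ha).ne).symm
      _ = 1 := by rw [h1, ENNReal.toReal_one]
  -- the corrected densities
  set f : Fin m → En n → ℝ :=
    fun i y => if ∑ j, p j * fraw j y = 1 then fraw i y else 1 with hf
  have hcondmeas : MeasurableSet {y : En n | ∑ j, p j * fraw j y = 1} := by
    have : Measurable fun y : En n => ∑ j, p j * fraw j y :=
      Finset.measurable_sum _ fun j _ => (hfraw_meas j).const_mul (p j)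
    exact this (measurableSet_singleton 1)
  have hfeq : ∀ i, f i =ᵐ[ν] fraw i := by
    intro i
    filter_upwards [hae] with y hy
    rw [hf]
    simp only
    rw [if_pos hy]
  refine ⟨f, ?_, ?_, ?_, ?_, ?_⟩
  · intro i
    exact Measurable.ite hcondmeas (hfraw_meas i) measurable_const
  · intro i y
    rw [hf]
    simp only
    split
    · exact hfraw_nonneg i y
    · exact zero_le_one
  · intro y
    by_cases h : ∑ j, p j * fraw j y = 1
    · have : ∀ i : Fin m, p i * f i y = p i * fraw i y := by
        intro i
        rw [hf]
        simp only
        rw [if_pos h]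
      rw [Finset.sum_congr rfl fun i _ => this i]
      exact h
    · have : ∀ i : Fin m, p i * f i y = p i := by
        intro i
        rw [hf]
        simp only
        rw [if_neg h, mul_one]
      rw [Finset.sum_congr rfl fun i _ => this i]
      exact hpsum
  · intro i
    rw [integral_congr_ae (hfeq i)]
    exact hfraw_int1 i
  · intro i
    have : (fun y => f i y • y) =ᵐ[ν] fun y => fraw i y • y := by
      filter_upwards [hfeq i] with y hy
      rw [hy]
    rw [integral_congr_ae this]
    exact hfraw_intx i

end Stmt11Aux

open Stmt11Aux in
/-- Let `μ = Σ pᵢ δ_{xᵢ}` be a centered finitely supported probability measure on `ℝⁿ` and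
`ν` a centered probability measure on `ℝⁿ` with a density and finite first moment, not
supported on any hyperplane.  Then a martingale coupling `(X, Y)` of `μ` and `ν` exists if
and only if there are nonnegative functions `f₁, …, f_m` with `Σ pᵢ fᵢ ≡ 1`,
`E[fᵢ(Y)] = 1` and `E[Y fᵢ(Y)] = xᵢ`. -/
theorem statement_11 (n m : ℕ) (hm : 1 ≤ m)
    (p : Fin m → ℝ) (x : Fin m → EuclideanSpace ℝ (Fin n))
    (hp : ∀ i, 0 < p i) (hpsum : ∑ i, p i = 1) (hcent : ∑ i, p i • x i = 0)
    (ν : Measure (EuclideanSpace ℝ (Fin n))) (hν : IsProbabilityMeasure ν)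
    (hac : ν ≪ volume) (hmom : Integrable (fun y => y) ν)
    (hνcent : ∫ y, y ∂ν = 0)
    (hhyp : ∀ (v : EuclideanSpace ℝ (Fin n)) (c : ℝ), v ≠ 0 → ν {y | ⟪v, y⟫ = c} ≠ 1) :
    (∃ (Ω : Type) (mΩ : MeasurableSpace Ω) (P : Measure Ω)
       (X Y : Ω → EuclideanSpace ℝ (Fin n)),
       IsProbabilityMeasure P ∧ Measurable X ∧ Measurable Y ∧ Integrable Y P ∧
       Measure.map X P = ∑ i, ENNReal.ofReal (p i) • Measure.dirac (x i) ∧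
       Measure.map Y P = ν ∧
       P[Y | MeasurableSpace.comap X (by infer_instance)] =ᵐ[P] X) ↔
    (∃ f : Fin m → EuclideanSpace ℝ (Fin n) → ℝ,
       (∀ i, Measurable (f i)) ∧ (∀ i y, 0 ≤ f i y) ∧
       (∀ y, ∑ i, p i * f i y = 1) ∧
       (∀ i, ∫ y, f i y ∂ν = 1) ∧
       (∀ i, ∫ y, f i y • y ∂ν = x i)) := by
  constructor
  · rintro ⟨Ω, mΩ, P, X, Y, hP, hXm, hYm, hYint, hmapX, hmapY, hcond⟩
    exact fwd n m p x hp hpsum ν hν Ω mΩ P X Y hP hXm hYm hYint hmapX hmapY hcond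
  · rintro ⟨f, hfm, hf0, hfsum, hf1, hfx⟩
    exact bwd n m p x hp hpsum ν hν hmom f hfm hf0 hfsum hf1 hfx
end
end

section
/- Let K be a convex set in ℝⁿ and let O be a (closed) coordinate orthant of ℝⁿ. Then the solidification of K ∩ O, defined as C = {y ∈ ℝⁿ : ∃ x ∈ K ∩ O with |x_i| ≥ |y_i| for all i}, is a convex set. -/
/-- Let `K` be a convex set in `ℝⁿ` and `O` a closed coordinate orthant.  Then the
solidification `C = {y : ∃ x ∈ K ∩ O, |xᵢ| ≥ |yᵢ| for all i}` of `K ∩ O` is convex. -/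
theorem statement_18 (n : ℕ) (K : Set (EuclideanSpace ℝ (Fin n))) (hK : Convex ℝ K)
    (ε : Fin n → ℝ) (hε : ∀ i, ε i = 1 ∨ ε i = -1) :
    Convex ℝ {y : EuclideanSpace ℝ (Fin n) |
      ∃ x ∈ K ∩ {z : EuclideanSpace ℝ (Fin n) | ∀ i, 0 ≤ ε i * z i},
        ∀ i, |y i| ≤ |x i|} := by
  rintro y₁ ⟨x₁, ⟨hK₁, hO₁⟩, h₁⟩ y₂ ⟨x₂, ⟨hK₂, hO₂⟩, h₂⟩ a b ha hb hab
  have habs : ∀ (x : EuclideanSpace ℝ (Fin n)), (∀ i, 0 ≤ ε i * x i) →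
      ∀ i, |x i| = ε i * x i := by
    intro x hx i
    have hi := hx i
    rcases hε i with h | h <;> rw [h] at hi ⊢
    · rw [one_mul, abs_of_nonneg (by linarith)]
    · rw [abs_of_nonpos (by nlinarith)]; ring
  refine ⟨a • x₁ + b • x₂, ⟨hK hK₁ hK₂ ha hb hab, fun i => ?_⟩, fun i => ?_⟩
  · have := hO₁ i; have := hO₂ i
    simp only [PiLp.add_apply, PiLp.smul_apply, smul_eq_mul, mul_add]
    nlinarith
  · have e1 := habs x₁ hO₁ i
    have e2 := habs x₂ hO₂ i
    have hO : ∀ j, 0 ≤ ε j * (a • x₁ + b • x₂) j := by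
      intro j
      have := hO₁ j; have := hO₂ j
      simp only [PiLp.add_apply, PiLp.smul_apply, smul_eq_mul, mul_add]
      nlinarith
    have e3 := habs _ hO i
    simp only [PiLp.add_apply, PiLp.smul_apply, smul_eq_mul] at e3 ⊢
    calc |(a • y₁ + b • y₂) i| ≤ a * |y₁ i| + b * |y₂ i| := by
          simp only [PiLp.add_apply, PiLp.smul_apply, smul_eq_mul]
          calc |a * y₁ i + b * y₂ i| ≤ |a * y₁ i| + |b * y₂ i| := abs_add_le _ _
            _ = a * |y₁ i| + b * |y₂ i| := by
                rw [abs_mul, abs_mul, abs_of_nonneg ha, abs_of_nonneg hb]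
      _ ≤ a * |x₁ i| + b * |x₂ i| := by
          have := h₁ i; have := h₂ i; nlinarith
      _ = ε i * (a * x₁ i + b * x₂ i) := by rw [e1, e2]; ring
      _ = |a * x₁ i + b * x₂ i| := e3.symm
end
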